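/- Let A = [A_{i,j}]_{i,j=1}^m ∈ M_m(M_n) be positive semidefinite. Then (tr A) I_{mn} + (tr₂ A) ⊗ I_n ≥ A + I_m ⊗ (tr₁ A). (Note: no PPT assumption is required, only positive semidefiniteness.) -/

import Mathlib

open Matrix Kronecker
open scoped ComplexOrder

/-- The first partial trace of an `m × m` block matrix with `n × n` blocks:
the sum of the diagonal blocks. -/
noncomputable def ptrace1 (m n : ℕ) (A : Matrix (Fin m × Fin n) (Fin m × Fin n) ℂ) :
    Matrix (Fin n) (Fin n) ℂ :=
  Matrix.of fun r s => ∑ i, A (i, r) (i, s)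

/-- The second partial trace of an `m × m` block matrix with `n × n` blocks:
the `m × m` matrix of traces of the blocks. -/
noncomputable def ptrace2 (m n : ℕ) (A : Matrix (Fin m × Fin n) (Fin m × Fin n) ℂ) :
    Matrix (Fin m) (Fin m) ℂ :=
  Matrix.of fun i j => ∑ r, A (i, r) (j, r)

/-- Scalar building block for the "symmetric" Kraus factor `E_{kl} + E_{lk}`. -/
noncomputable def eP (m : ℕ) (k l x y : Fin m) : ℂ :=
  (if x = k ∧ y = l then 1 else 0) + (if x = l ∧ y = k then 1 else 0)

/-- Scalar building block for the "antisymmetric" Kraus factor `E_{rs} - E_{sr}`. -/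
noncomputable def fQ (n : ℕ) (r s x y : Fin n) : ℂ :=
  (if x = r ∧ y = s then 1 else 0) - (if x = s ∧ y = r then 1 else 0)

lemma eP_star (m : ℕ) (k l x y : Fin m) : star (eP m k l x y) = eP m k l x y := by
  unfold eP; split_ifs <;> simp

lemma fQ_star (n : ℕ) (r s x y : Fin n) : star (fQ n r s x y) = fQ n r s x y := by
  unfold fQ; split_ifs <;> simp

lemma eP_sum (m : ℕ) (x y u v : Fin m) :
    ∑ k, ∑ l, eP m k l x y * eP m k l u v
      = 2 * ((if x = u then (1:ℂ) else 0) * (if y = v then 1 else 0)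
        + (if x = v then (1:ℂ) else 0) * (if y = u then 1 else 0)) := by
  unfold eP
  simp only [add_mul, mul_add, Finset.sum_add_distrib, ite_mul, mul_ite, one_mul, mul_one,
    zero_mul, mul_zero, ite_and]
  simp [Finset.sum_ite_eq, Finset.sum_ite_eq']
  split_ifs <;> ring

lemma fQ_sum (n : ℕ) (x y u v : Fin n) :
    ∑ r, ∑ s, fQ n r s x y * fQ n r s u v
      = 2 * ((if x = u then (1:ℂ) else 0) * (if y = v then 1 else 0)
        - (if x = v then (1:ℂ) else 0) * (if y = u then 1 else 0)) := by
  unfold fQ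
  simp only [sub_mul, mul_sub, Finset.sum_sub_distrib, ite_mul, mul_ite, one_mul, mul_one,
    zero_mul, mul_zero, ite_and]
  simp [Finset.sum_ite_eq, Finset.sum_ite_eq']
  split_ifs <;> ring

/-- The Kraus operators `(E_{kl} + E_{lk}) ⊗ (E_{rs} - E_{sr})`. -/
noncomputable def CM (m n : ℕ) (k l : Fin m) (r s : Fin n) :
    Matrix (Fin m × Fin n) (Fin m × Fin n) ℂ :=
  Matrix.of fun a c => eP m k l a.1 c.1 * fQ n r s a.2 c.2

lemma CM_entry (m n : ℕ) (A : Matrix (Fin m × Fin n) (Fin m × Fin n) ℂ)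
    (k l : Fin m) (r s : Fin n) (a b : Fin m × Fin n) :
    (CM m n k l r s * Aᵀ * (CM m n k l r s)ᴴ) a b
      = ∑ c, ∑ d, (eP m k l a.1 c.1 * eP m k l b.1 d.1)
          * ((fQ n r s a.2 c.2 * fQ n r s b.2 d.2) * A d c) := by
  simp only [Matrix.mul_apply, conjTranspose_apply, transpose_apply, CM, of_apply,
    star_mul', eP_star, fQ_star, Finset.sum_mul]
  rw [Finset.sum_comm]
  exact Finset.sum_congr rfl fun c _ => Finset.sum_congr rfl fun d _ => by ring

/-- The key algebraic identity:
`(tr A) I + (tr₂ A) ⊗ I - A - I ⊗ (tr₁ A) = (1/4) ∑ C Aᵀ Cᴴ`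
where `C` runs over the operators `(E_{kl} + E_{lk}) ⊗ (E_{rs} - E_{sr})`. -/
lemma key (m n : ℕ) (A : Matrix (Fin m × Fin n) (Fin m × Fin n) ℂ) :
    A.trace • (1 : Matrix (Fin m × Fin n) (Fin m × Fin n) ℂ)
      + ptrace2 m n A ⊗ₖ (1 : Matrix (Fin n) (Fin n) ℂ)
      - (A + (1 : Matrix (Fin m) (Fin m) ℂ) ⊗ₖ ptrace1 m n A)
    = (1/4 : ℂ) • ∑ k, ∑ l, ∑ r, ∑ s, CM m n k l r s * Aᵀ * (CM m n k l r s)ᴴ := by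
  ext ⟨i, p⟩ ⟨j, q⟩
  simp only [Matrix.smul_apply, Matrix.sum_apply, CM_entry, smul_eq_mul]
  -- reorder sums: from k l r s c d to c d k l r s
  conv_rhs => enter [2, 2, k, 2, l, 2, r]; rw [Finset.sum_comm]
  conv_rhs => enter [2, 2, k, 2, l]; rw [Finset.sum_comm]
  conv_rhs => enter [2, 2, k]; rw [Finset.sum_comm]
  conv_rhs => enter [2]; rw [Finset.sum_comm]
  conv_rhs => enter [2, 2, c, 2, k, 2, l, 2, r]; rw [Finset.sum_comm]
  conv_rhs => enter [2, 2, c, 2, k, 2, l]; rw [Finset.sum_comm]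
  conv_rhs => enter [2, 2, c, 2, k]; rw [Finset.sum_comm]
  conv_rhs => enter [2, 2, c]; rw [Finset.sum_comm]
  have inner : ∀ c d : Fin m × Fin n,
      (∑ k, ∑ l, ∑ r, ∑ s, (eP m k l i c.1 * eP m k l j d.1)
          * ((fQ n r s p c.2 * fQ n r s q d.2) * A d c))
      = (∑ k, ∑ l, eP m k l i c.1 * eP m k l j d.1)
          * ((∑ r, ∑ s, fQ n r s p c.2 * fQ n r s q d.2) * A d c) := by
    intro c d
    simp only [← Finset.mul_sum, ← Finset.sum_mul]
  simp only [inner, eP_sum, fQ_sum]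
  simp only [Matrix.sub_apply, Matrix.add_apply, Matrix.smul_apply, kroneckerMap_apply,
    Matrix.one_apply, ptrace1, ptrace2, Matrix.of_apply, Matrix.trace, Matrix.diag,
    smul_eq_mul, Fintype.sum_prod_type, Prod.mk.injEq, ite_and]
  simp only [mul_ite, ite_mul, mul_one, one_mul, mul_zero, zero_mul, mul_sub, sub_mul,
    mul_add, add_mul, Finset.sum_add_distrib, Finset.sum_sub_distrib,
    Finset.sum_ite_eq, Finset.sum_ite_eq', Finset.mem_univ, if_true, Finset.mul_sum,
    Finset.sum_mul, Finset.sum_ite_irrel, Finset.sum_const_zero]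
  have h4 : ∀ x : ℂ, 1/4 * (2 * (2 * x)) = x := fun x => by ring
  by_cases hij : i = j <;> by_cases hpq : p = q <;>
    simp only [hij, hpq, if_true, if_false, Finset.sum_add_distrib, Finset.sum_sub_distrib,
      Finset.sum_ite_eq, Finset.sum_ite_eq', Finset.mem_univ, if_true,
      Finset.sum_ite_irrel, Finset.sum_const_zero, h4] <;>
    ring

lemma posSemidef_finset_sum {ι : Type*} {N : Type*} [Fintype N] [DecidableEq N] (s : Finset ι)
    (f : ι → Matrix N N ℂ) (h : ∀ i ∈ s, (f i).PosSemidef) : (∑ i ∈ s, f i).PosSemidef :=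
  Finset.sum_induction f _ (fun _ _ ha hb => ha.add hb) Matrix.PosSemidef.zero h

lemma posSemidef_quarter_smul {N : Type*} [Fintype N] [DecidableEq N] {M : Matrix N N ℂ}
    (hM : M.PosSemidef) : ((1/4 : ℂ) • M).PosSemidef := by
  constructor
  · show ((1/4 : ℂ) • M)ᴴ = _
    rw [Matrix.conjTranspose_smul, hM.1.eq]
    congr 1
    simp [Complex.ext_iff]
  · intro x
    refine (hM.smul (a := (1/4 : ℂ)) ?_).2 x
    rw [Complex.le_def]
    norm_num

/-- If `A` is positive semidefinite (no PPT assumption needed), then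
`(tr A) I_{mn} + (tr₂ A) ⊗ Iₙ ≥ A + Iₘ ⊗ (tr₁ A)`. -/
theorem stmt_12 (m n : ℕ) (A : Matrix (Fin m × Fin n) (Fin m × Fin n) ℂ)
    (hA : A.PosSemidef) :
    (A.trace • (1 : Matrix (Fin m × Fin n) (Fin m × Fin n) ℂ)
      + ptrace2 m n A ⊗ₖ (1 : Matrix (Fin n) (Fin n) ℂ)
      - (A + (1 : Matrix (Fin m) (Fin m) ℂ) ⊗ₖ ptrace1 m n A)).PosSemidef := by
  rw [key m n A]
  exact posSemidef_quarter_smul (posSemidef_finset_sum _ _ fun k _ =>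
    posSemidef_finset_sum _ _ fun l _ => posSemidef_finset_sum _ _ fun r _ =>
      posSemidef_finset_sum _ _ fun s _ =>
        hA.transpose.mul_mul_conjTranspose_same (CM m n k l r s))
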